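/- Let K be a field, W₋ and W₊ K-vector spaces, and let B₊ ∈ End(W₊), A ∈ Hom(W₊, W₋), a ∈ W₋, b ∈ Hom(W₊, K). On W := W₊ × K define B'(x, λ) := (B₊x, b(x)), A'(x, λ) := A(x) − λ·a, and b'(x, λ) := −λ. Then the following are equivalent: (1) there exists a nonzero subspace S ⊆ W with B'(S) ⊆ S, A'(S) = 0 and b'(S) = 0; (2) there exists a nonzero subspace S₀ ⊆ W₊ with B₊(S₀) ⊆ S₀, A(S₀) = 0 and b(S₀) = 0. -/
import Mathlib


/-- Equivalence of the stability condition (S1) before and after the D5 resolution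
of a separated bow variety with local charge splitting `w = w' + 1`: with
`B'(x,λ) = (B₊x, b x)`, `A'(x,λ) = A x - λ•a`, `b'(x,λ) = -λ` on `W₊ × K`, there is
a nonzero subspace `S ⊆ W₊ × K` with `B'(S) ⊆ S`, `A'(S) = 0`, `b'(S) = 0` iff
there is a nonzero subspace `S₀ ⊆ W₊` with `B₊(S₀) ⊆ S₀`, `A(S₀) = 0`, `b(S₀) = 0`. -/
theorem stmt10 {K : Type*} [Field K] {Wm Wp : Type*}
    [AddCommGroup Wm] [Module K Wm] [AddCommGroup Wp] [Module K Wp]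
    (Bp : Wp →ₗ[K] Wp) (A : Wp →ₗ[K] Wm) (a : Wm) (b : Wp →ₗ[K] K) :
    (∃ S : Submodule K (Wp × K), S ≠ ⊥ ∧
        (∀ v ∈ S, ((Bp v.1, b v.1) : Wp × K) ∈ S) ∧
        (∀ v ∈ S, A v.1 - v.2 • a = 0) ∧
        (∀ v ∈ S, -v.2 = (0 : K))) ↔
    (∃ S₀ : Submodule K Wp, S₀ ≠ ⊥ ∧
        (∀ x ∈ S₀, Bp x ∈ S₀) ∧ (∀ x ∈ S₀, A x = 0) ∧ (∀ x ∈ S₀, b x = 0)) := by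
  constructor
  · rintro ⟨S, hS, hB, hA, hb⟩
    refine ⟨S.map (LinearMap.fst K Wp K), ?_, ?_, ?_, ?_⟩
    · intro h
      apply hS
      rw [Submodule.eq_bot_iff] at h ⊢
      intro v hv
      have h1 : v.1 = 0 := h v.1 ⟨v, hv, rfl⟩
      have h2 : v.2 = 0 := neg_eq_zero.mp (hb v hv)
      exact Prod.ext h1 h2
    · rintro x ⟨v, hv, rfl⟩
      exact ⟨_, hB v hv, rfl⟩
    · rintro x ⟨v, hv, rfl⟩
      have h2 : v.2 = 0 := neg_eq_zero.mp (hb v hv)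
      have := hA v hv
      rwa [h2, zero_smul, sub_zero] at this
    · rintro x ⟨v, hv, rfl⟩
      have := hb _ (hB v hv)
      simpa using this
  · rintro ⟨S₀, hS₀, hB, hA, hb⟩
    refine ⟨S₀.map (LinearMap.inl K Wp K), ?_, ?_, ?_, ?_⟩
    · intro h
      apply hS₀
      rw [Submodule.eq_bot_iff] at h ⊢
      intro x hx
      have := h (x, 0) ⟨x, hx, rfl⟩
      simpa using congrArg Prod.fst this
    · rintro v ⟨x, hx, rfl⟩
      exact ⟨Bp x, hB x hx, by simp [hb x hx]⟩
    · rintro v ⟨x, hx, rfl⟩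
      simp [hA x hx]
    · rintro v ⟨x, hx, rfl⟩
      simp
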